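/- arXiv:2110.01375 — 6 statements merged into one kernel-verified Lean document; each statement's English description precedes it below -/
import Mathlib

section
/- Let κ be an infinite cardinal, G = S_X^{<κ} the group of permutations of X with support of cardinality less than κ, and X_G the coarse space on X with base {E_F : F ⊆ G finite, id ∈ F}, E_F = {(x,gx) : g ∈ F, x ∈ X}. Then every permutation h of X is macro-uniform as a map X_G → X_G. -/
open Set

/-- Composition of two relations (as subsets of `X × X`). -/
def relComp {X : Type*} (s t : Set (X × X)) : Set (X × X) :=
  {p | ∃ z, (p.1, z) ∈ s ∧ (z, p.2) ∈ t}

/-- Inverse of a relation. -/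
def relInv {X : Type*} (s : Set (X × X)) : Set (X × X) := {p | (p.2, p.1) ∈ s}

/-- A coarse structure on `X`: a family of reflexive relations closed under
composition, inversion and reflexive subrelations, whose union is `X × X`. -/
structure IsCoarse {X : Type*} (𝓔 : Set (Set (X × X))) : Prop where
  refl : ∀ s ∈ 𝓔, ∀ x : X, (x, x) ∈ s
  comp : ∀ s ∈ 𝓔, ∀ t ∈ 𝓔, relComp s t ∈ 𝓔
  inv : ∀ s ∈ 𝓔, relInv s ∈ 𝓔
  subrel : ∀ s ∈ 𝓔, ∀ t, (∀ x : X, (x, x) ∈ t) → t ⊆ s → t ∈ 𝓔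
  cover : ∀ p : X × X, ∃ s ∈ 𝓔, p ∈ s

/-- The ball of radius `s` around `x`. -/
def ball {X : Type*} (s : Set (X × X)) (x : X) : Set X := {y | (x, y) ∈ s}

/-- A set is bounded if it is contained in some ball. -/
def IsBoundedIn {X : Type*} (𝓔 : Set (Set (X × X))) (B : Set X) : Prop :=
  ∃ s ∈ 𝓔, ∃ x : X, B ⊆ ball s x

/-- A bornology: closed under subsets and finite unions, contains all finite sets. -/
def IsBornology {X : Type*} (𝓑 : Set (Set X)) : Prop :=
  (∀ A ∈ 𝓑, ∀ B ⊆ A, B ∈ 𝓑) ∧ (∀ A ∈ 𝓑, ∀ B ∈ 𝓑, A ∪ B ∈ 𝓑) ∧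
    (∀ A : Set X, A.Finite → A ∈ 𝓑)

/-- The entourage `E_B = Δ_X ∪ (B × B)` of the discrete coarse space. -/
def EB {X : Type*} (B : Set X) : Set (X × X) :=
  {p | p.1 = p.2 ∨ (p.1 ∈ B ∧ p.2 ∈ B)}

/-- The discrete coarse structure defined by a bornology `𝓑`. -/
def discreteCoarse {X : Type*} (𝓑 : Set (Set X)) : Set (Set (X × X)) :=
  {s | (∀ x : X, (x, x) ∈ s) ∧ ∃ B ∈ 𝓑, s ⊆ EB B}

/-- `𝓔'` is a base for `𝓔`. -/
def IsBase {X : Type*} (𝓔' 𝓔 : Set (Set (X × X))) : Prop :=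
  𝓔' ⊆ 𝓔 ∧ ∀ s ∈ 𝓔, ∃ t ∈ 𝓔', s ⊆ t

/-- Discrete coarse space: outside some bounded set all balls are singletons. -/
def IsDiscreteCoarseSpace {X : Type*} (𝓔 : Set (Set (X × X))) : Prop :=
  ∀ s ∈ 𝓔, ∃ B : Set X, IsBoundedIn 𝓔 B ∧ ∀ x ∉ B, ball s x = {x}

/-- A self-map is bornologous if it sends bounded sets to bounded sets. -/
def Bornologous {X : Type*} (𝓔 : Set (Set (X × X))) (f : X → X) : Prop :=
  ∀ B : Set X, IsBoundedIn 𝓔 B → IsBoundedIn 𝓔 (f '' B)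

/-- A self-map is macro-uniform. -/
def MacroUniform {X : Type*} (𝓔 : Set (Set (X × X))) (f : X → X) : Prop :=
  ∀ s ∈ 𝓔, ∃ t ∈ 𝓔, ∀ x y : X, (x, y) ∈ s → (f x, f y) ∈ t

/-- The entourage determined by a finite set `F` of permutations. -/
def EF {X : Type*} (F : Finset (Equiv.Perm X)) : Set (X × X) :=
  {p | ∃ g ∈ F, p.2 = g p.1}

/-- The coarse structure on `X` generated by a set `G` of permutations of `X`
(with base the entourages `EF F`, `F ⊆ G` finite containing the identity). -/
def permCoarse {X : Type*} (G : Set (Equiv.Perm X)) : Set (Set (X × X)) :=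
  {s | (∀ x : X, (x, x) ∈ s) ∧
    ∃ F : Finset (Equiv.Perm X), ↑F ⊆ G ∧ (1 : Equiv.Perm X) ∈ F ∧ s ⊆ EF F}

/-- The support of a permutation. -/
def psupp {X : Type*} (g : Equiv.Perm X) : Set X := {x | g x ≠ x}

/-- Permutations of support of cardinality less than `κ`. -/
def SuppLT (X : Type*) (κ : Cardinal) : Set (Equiv.Perm X) :=
  {g | Cardinal.mk (psupp g) < κ}

/-- A permutation compatible with the coarse structure `𝓔`. -/
def Compatible {X : Type*} (𝓔 : Set (Set (X × X))) (g : Equiv.Perm X) : Prop :=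
  ∃ s ∈ 𝓔, ∀ x : X, (x, g x) ∈ s

/-- A finitary coarse space: uniformly bounded finite balls. -/
def Finitary {X : Type*} (𝓔 : Set (Set (X × X))) : Prop :=
  ∀ s ∈ 𝓔, ∃ n : ℕ, ∀ x : X, (ball s x).Finite ∧ (ball s x).ncard < n

/-- A locally finite coarse space: all balls finite. -/
def LocallyFinite' {X : Type*} (𝓔 : Set (Set (X × X))) : Prop :=
  ∀ s ∈ 𝓔, ∀ x : X, (ball s x).Finite

/-- A crowded subset: some entourage has nontrivial balls at all its points. -/
def Crowded {X : Type*} (𝓔 : Set (Set (X × X))) (Y : Set X) : Prop :=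
  ∃ s ∈ 𝓔, ∀ y ∈ Y, 1 < (ball s y).ncard

/-- An asymorphism: a permutation which is macro-uniform in both directions. -/
def IsAsymorphism {X : Type*} (𝓔 : Set (Set (X × X))) (h : Equiv.Perm X) : Prop :=
  MacroUniform 𝓔 h ∧ MacroUniform 𝓔 h.symm

lemma psupp_conj {X : Type*} (h g : Equiv.Perm X) :
    psupp (h * g * h⁻¹) = h '' psupp g := by
  ext x
  simp only [psupp, Set.mem_setOf_eq, Set.mem_image, Equiv.Perm.mul_apply]
  constructor
  · intro hx
    refine ⟨h⁻¹ x, fun hc => hx ?_, by simp⟩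
    rw [hc]; simp
  · rintro ⟨y, hy, rfl⟩
    rw [show h⁻¹ (h y) = y from h.symm_apply_apply y]
    exact fun hc => hy (h.injective hc)

theorem perm_macroUniform_suppLT {X : Type*} [Infinite X] (κ : Cardinal)
    (hκ : Cardinal.aleph0 ≤ κ) (h : Equiv.Perm X) :
    MacroUniform (permCoarse (SuppLT X κ)) h := by
  classical
  rintro s ⟨hrefl, F, hF, h1F, hsub⟩
  set F' : Finset (Equiv.Perm X) := F.image (fun g => h * g * h⁻¹) with hF'
  have h1' : (1 : Equiv.Perm X) ∈ F' := by
    apply Finset.mem_image.2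
    exact ⟨1, h1F, by group⟩
  refine ⟨EF F', ⟨?_, ?_⟩, ?_⟩
  · intro x
    exact ⟨1, h1', by simp⟩
  · refine ⟨F', ?_, h1', subset_rfl⟩
    intro g hg
    simp only [hF', Finset.coe_image, Set.mem_image, Finset.mem_coe] at hg
    obtain ⟨g0, hg0, rfl⟩ := hg
    have := hF hg0
    simp only [SuppLT, Set.mem_setOf_eq] at this ⊢
    rw [psupp_conj, Cardinal.mk_image_eq h.injective]
    exact this
  · intro x y hxy
    obtain ⟨g, hg, hy⟩ := hsub hxy
    refine ⟨h * g * h⁻¹, Finset.mem_image.2 ⟨g, hg, rfl⟩, ?_⟩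
    have hy' : y = g x := hy
    simp [Equiv.Perm.mul_apply, hy']
end

section
/- Let κ be an infinite cardinal and G = S_X^{<κ}. Then every permutation h of X is an asymorphism of the coarse space X_G, i.e., both h and h⁻¹ are macro-uniform. -/
open Set

/-- Discrete coarse space: outside some bounded set all balls are singletons. -/
def IsDiscrete' {X : Type*} (𝓔 : Set (Set (X × X))) : Prop :=
  ∀ s ∈ 𝓔, ∃ B : Set X, IsBoundedIn 𝓔 B ∧ ∀ x ∉ B, ball s x = {x}

lemma macroUniform_suppLT {X : Type*} (κ : Cardinal) (h : Equiv.Perm X) :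
    MacroUniform (permCoarse (SuppLT X κ)) h := by
  classical
  rintro s ⟨hrefl, F, hFG, h1F, hsF⟩
  refine ⟨EF (F.image (fun g => h * g * h⁻¹)), ⟨?_, F.image (fun g => h * g * h⁻¹),
    ?_, ?_, le_refl _⟩, ?_⟩
  · intro x
    exact ⟨h * 1 * h⁻¹, Finset.mem_image_of_mem _ h1F, by simp⟩
  · intro g hg
    simp only [Finset.coe_image, Set.mem_image, Finset.mem_coe] at hg
    obtain ⟨g₀, hg₀, rfl⟩ := hg
    have := hFG hg₀
    simp only [SuppLT, Set.mem_setOf_eq] at this ⊢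
    rw [psupp_conj, Cardinal.mk_image_eq h.injective]
    exact this
  · simpa using Finset.mem_image_of_mem (fun g => h * g * h⁻¹) h1F
  · intro x y hxy
    obtain ⟨g, hg, hy⟩ := hsF hxy
    exact ⟨h * g * h⁻¹, Finset.mem_image_of_mem _ hg, by simp; exact hy⟩

theorem perm_asymorphism_suppLT {X : Type*} [Infinite X] (κ : Cardinal)
    (hκ : Cardinal.aleph0 ≤ κ) (h : Equiv.Perm X) :
    IsAsymorphism (permCoarse (SuppLT X κ)) h :=
  ⟨macroUniform_suppLT κ h, macroUniform_suppLT κ h.symm⟩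
end

section
/- (3-Sets Lemma) For any permutation g of a set A with no fixed points, there exists a partition of A into three sets A₁, A₂, A₃ such that Aᵢ ∩ g(Aᵢ) = ∅ for i = 1, 2, 3. -/
open Set

attribute [local instance] Classical.propDecidable

namespace ThreeSets

variable {A : Type*}

/-- A fixed representative of the `g`-orbit of `a`. -/
noncomputable def rep (g : Equiv.Perm A) (a : A) : A :=
  (Quotient.mk (Equiv.Perm.SameCycle.setoid g) a).out

lemma rep_sameCycle (g : Equiv.Perm A) (a : A) : g.SameCycle (rep g a) a :=
  Quotient.mk_out (s := Equiv.Perm.SameCycle.setoid g) a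

lemma rep_apply (g : Equiv.Perm A) (a : A) : rep g (g a) = rep g a := by
  unfold rep
  congr 1
  exact Quotient.sound ⟨-1, by simp⟩

/-- The coloring on the orbit of `r`. -/
noncomputable def colAux (g : Equiv.Perm A) (r x : A) : Fin 3 :=
  if hp : ∃ n, 0 < n ∧ (g ^ n) r = r then
    if hk : ∃ k : ℕ, (g ^ k) r = x then
      if Nat.find hk = Nat.find hp - 1 ∧ Odd (Nat.find hp) then 2
      else if Even (Nat.find hk) then 0 else 1
    else 0
  else
    if hi : ∃ i : ℤ, (g ^ i) r = x then
      (if Even (Classical.choose hi) then 0 else 1)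
    else 0

/-- If `g^d r = r` with `d ≠ 0` an integer, then `r` has a positive natural period. -/
lemma period_of_zpow (g : Equiv.Perm A) {r : A} {d : ℤ} (hd : d ≠ 0)
    (h : (g ^ d) r = r) : ∃ n, 0 < n ∧ (g ^ n) r = r := by
  have h' : (g ^ (-d)) r = r := by
    have := congrArg (g ^ (-d)) h
    rw [← Equiv.Perm.mul_apply, ← zpow_add, neg_add_cancel, zpow_zero,
      Equiv.Perm.one_apply] at this
    exact this.symm
  refine ⟨d.natAbs, Int.natAbs_pos.mpr hd, ?_⟩
  rcases le_or_gt 0 d with hd0 | hd0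
  · rw [← zpow_natCast, Int.natAbs_of_nonneg hd0]; exact h
  · rw [← zpow_natCast, Int.ofNat_natAbs_of_nonpos hd0.le]; exact h'

/-- In an infinite orbit, the integer index is unique. -/
lemma zpow_inj (g : Equiv.Perm A) {r : A} (hp : ¬ ∃ n, 0 < n ∧ (g ^ n) r = r)
    {i j : ℤ} (h : (g ^ i) r = (g ^ j) r) : i = j := by
  by_contra hne
  apply hp
  apply period_of_zpow g (d := i - j) (sub_ne_zero.mpr hne)
  have := congrArg (g ^ (-j)) h
  rwa [← Equiv.Perm.mul_apply, ← Equiv.Perm.mul_apply, ← zpow_add, ← zpow_add,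
    neg_add_cancel, zpow_zero, Equiv.Perm.one_apply, add_comm, ← sub_eq_add_neg] at this

/-- In a finite orbit, anything `SameCycle`-related to `r` is a natural power of `r`. -/
lemma exists_nat_pow (g : Equiv.Perm A) {r a : A} (hp : ∃ n, 0 < n ∧ (g ^ n) r = r)
    (hsc : ∃ i : ℤ, (g ^ i) r = a) : ∃ k : ℕ, (g ^ k) r = a := by
  obtain ⟨n, hn, hfix⟩ := hp
  obtain ⟨i, hi⟩ := hsc
  have hn' : (n : ℤ) ≠ 0 := by exact_mod_cast hn.ne'
  refine ⟨(i % n).toNat, ?_⟩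
  have hnonneg : 0 ≤ i % (n : ℤ) := Int.emod_nonneg i hn'
  have h1 : (g ^ ((i % (n : ℤ)).toNat) : Equiv.Perm A) = g ^ (i % (n : ℤ)) := by
    rw [← zpow_natCast, Int.toNat_of_nonneg hnonneg]
  rw [h1]
  have hfix' : ∀ q : ℤ, ((g ^ (n : ℤ)) ^ q) r = r := by
    intro q
    have : Function.IsFixedPt (g ^ (n : ℤ)) r := by
      rw [zpow_natCast]; exact hfix
    exact this.perm_zpow q
  have : (g ^ i) r = (g ^ (i % (n:ℤ))) (((g ^ (n:ℤ)) ^ (i / n)) r) := by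
    rw [← Equiv.Perm.mul_apply, ← zpow_mul, ← zpow_add, mul_comm ((n:ℤ)) (i / n), Int.emod_add_ediv_mul i n]
  rw [hfix'] at this
  rw [← this, hi]

lemma colAux_ne (g : Equiv.Perm A) (hg : ∀ b : A, g b ≠ b) (r a : A)
    (hsc : ∃ i : ℤ, (g ^ i) r = a) :
    colAux g r (g a) ≠ colAux g r a := by
  have hsc' : ∃ i : ℤ, (g ^ i) r = g a := by
    obtain ⟨i, hi⟩ := hsc
    exact ⟨1 + i, by rw [zpow_add, zpow_one, Equiv.Perm.mul_apply, hi]⟩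
  by_cases hp : ∃ n, 0 < n ∧ (g ^ n) r = r
  · -- finite orbit
    have hka := exists_nat_pow g hp hsc
    have hkga := exists_nat_pow g hp hsc'
    rw [colAux, colAux, dif_pos hp, dif_pos hp, dif_pos hka, dif_pos hkga]
    set n := Nat.find hp with hn_def
    set m := Nat.find hka with hm_def
    set m' := Nat.find hkga with hm'_def
    have hnpos : 0 < n := (Nat.find_spec hp).1
    have hfix : (g ^ n) r = r := (Nat.find_spec hp).2
    have hma : (g ^ m) r = a := Nat.find_spec hka
    have hmga : (g ^ m') r = g a := Nat.find_spec hkga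
    have hn2 : 2 ≤ n := by
      have h1 : n ≠ 1 := by
        intro h
        exact hg r (by rw [h, pow_one] at hfix; exact hfix)
      omega
    have hmlt : m < n := by
      by_contra hle
      push_neg at hle
      have hPm : (g ^ (m - n)) r = a := by
        have : (g ^ (m - n)) ((g ^ n) r) = a := by
          rw [← Equiv.Perm.mul_apply, ← pow_add, Nat.sub_add_cancel hle, hma]
        rwa [hfix] at this
      exact Nat.find_min hka (by omega) hPm
    rcases eq_or_lt_of_le (Nat.le_sub_one_of_lt hmlt) with hcase | hcase
    · -- m = n - 1 : g a = r, m' = 0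
      have hga_r : g a = r := by
        have : (g ^ (m + 1)) r = g a := by
          rw [pow_succ', Equiv.Perm.mul_apply, hma]
        rw [show m + 1 = n by omega] at this
        rw [← this, hfix]
      have hm'0 : m' = 0 := by
        rw [hm'_def, Nat.find_eq_zero]
        rw [pow_zero]; exact hga_r.symm
      rw [hm'0]
      have hne : ¬ ((0 : ℕ) = n - 1 ∧ Odd n) := by
        rintro ⟨h0, _⟩; omega
      rw [if_neg hne, if_pos (Even.zero)]
      by_cases hodd : Odd n
      · rw [if_pos ⟨hcase, hodd⟩]; decide
      · have : ¬ Even m := by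
          rw [Nat.odd_iff] at hodd; rw [Nat.even_iff]; omega
        rw [if_neg (by tauto), if_neg this]; decide
    · -- m < n - 1 : m' = m + 1
      have hP : (g ^ (m + 1)) r = g a := by
        rw [pow_succ', Equiv.Perm.mul_apply, hma]
      have hle1 : m' ≤ m + 1 := Nat.find_min' hkga hP
      have hge : m + 1 ≤ m' := by
        by_contra hlt
        push_neg at hlt
        rcases Nat.eq_zero_or_eq_succ_pred m' with h0 | hsucc
        · -- r = g a : derive shorter period
          rw [h0, pow_zero, Equiv.Perm.one_apply] at hmga
          have hper : (g ^ (n - (m + 1))) r = r := by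
            have : (g ^ (n - (m + 1))) ((g ^ (m + 1)) r) = r := by
              rw [← Equiv.Perm.mul_apply, ← pow_add, Nat.sub_add_cancel (by omega), hfix]
            rwa [hP, ← hmga] at this
          exact Nat.find_min hp (by omega) ⟨by omega, hper⟩
        · set j := m' - 1 with hj
          rw [hsucc, pow_succ', Equiv.Perm.mul_apply] at hmga
          have : (g ^ (m' - 1)) r = a := g.injective hmga
          have := Nat.find_min' hka this
          omega
      have hm' : m' = m + 1 := by omega
      rw [hm']
      have hRHSne : ¬ (m = n - 1 ∧ Odd n) := by rintro ⟨h1, _⟩; omega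
      rw [if_neg hRHSne]
      by_cases hL : m + 1 = n - 1 ∧ Odd n
      · rw [if_pos hL]
        by_cases hEm : Even m
        · rw [if_pos hEm]; decide
        · rw [if_neg hEm]; decide
      · rw [if_neg hL]
        by_cases hEm : Even m
        · rw [if_pos hEm, if_neg (by rw [Nat.even_add_one]; exact fun h => h hEm)]
          decide
        · rw [if_neg hEm, if_pos (by rw [Nat.even_add_one]; exact hEm)]
          decide
  · -- infinite orbit
    rw [colAux, colAux, dif_neg hp, dif_neg hp, dif_pos hsc, dif_pos hsc']
    set i := Classical.choose hsc with hi_def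
    set j := Classical.choose hsc' with hj_def
    have hi : (g ^ i) r = a := Classical.choose_spec hsc
    have hj : (g ^ j) r = g a := Classical.choose_spec hsc'
    have hij : j = 1 + i := by
      apply zpow_inj g hp
      rw [hj, zpow_add, zpow_one, Equiv.Perm.mul_apply, hi]
    have hpar : Even j ↔ ¬ Even i := by
      rw [hij, add_comm, Int.even_add_one]
    by_cases hEi : Even i
    · rw [if_pos hEi, if_neg (by rw [hpar]; exact fun h => h hEi)]; decide
    · rw [if_neg hEi, if_pos (hpar.mpr hEi)]; decide

/-- The global 3-coloring. -/
noncomputable def col (g : Equiv.Perm A) (a : A) : Fin 3 := colAux g (rep g a) a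

lemma col_apply_ne (g : Equiv.Perm A) (hg : ∀ b : A, g b ≠ b) (a : A) :
    col g (g a) ≠ col g a := by
  unfold col
  rw [rep_apply]
  exact colAux_ne g hg _ a (rep_sameCycle g a)

end ThreeSets

theorem three_sets_lemma {A : Type*} (g : Equiv.Perm A) (hg : ∀ a : A, g a ≠ a) :
    ∃ A₁ A₂ A₃ : Set A, A₁ ∪ A₂ ∪ A₃ = Set.univ ∧
      Disjoint A₁ A₂ ∧ Disjoint A₁ A₃ ∧ Disjoint A₂ A₃ ∧
      A₁ ∩ (g '' A₁) = ∅ ∧ A₂ ∩ (g '' A₂) = ∅ ∧ A₃ ∩ (g '' A₃) = ∅ := by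
  classical
  refine ⟨{a | ThreeSets.col g a = 0}, {a | ThreeSets.col g a = 1},
    {a | ThreeSets.col g a = 2}, ?_, ?_, ?_, ?_, ?_, ?_, ?_⟩
  · ext a
    simp only [Set.mem_union, Set.mem_setOf_eq, Set.mem_univ, iff_true]
    have h3 : ∀ x : Fin 3, x = 0 ∨ x = 1 ∨ x = 2 := by decide
    rcases h3 (ThreeSets.col g a) with h | h | h <;> tauto
  · rw [Set.disjoint_left]
    intro a h1 h2
    simp only [Set.mem_setOf_eq] at h1 h2
    rw [h1] at h2; exact absurd h2 (by decide)
  · rw [Set.disjoint_left]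
    intro a h1 h2
    simp only [Set.mem_setOf_eq] at h1 h2
    rw [h1] at h2; exact absurd h2 (by decide)
  · rw [Set.disjoint_left]
    intro a h1 h2
    simp only [Set.mem_setOf_eq] at h1 h2
    rw [h1] at h2; exact absurd h2 (by decide)
  all_goals {
    rw [Set.eq_empty_iff_forall_notMem]
    rintro a ⟨ha, b, hb, rfl⟩
    simp only [Set.mem_setOf_eq] at ha hb
    exact ThreeSets.col_apply_ne g hg b (by rw [ha, hb]) }
end

section
/- Let (X, 𝓔) be an infinite finitary coarse space such that every permutation of X is an asymorphism. If g is a permutation of X compatible with 𝓔, then the support of g is a crowded subset of X, i.e., there exists E ∈ 𝓔 with |E[y]| > 1 for all y ∈ supp g. -/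
open Set

theorem supp_crowded_of_compatible {X : Type*} [Infinite X]
    (𝓔 : Set (Set (X × X))) (h : IsCoarse 𝓔) (hfin : Finitary 𝓔)
    (hasym : ∀ h : Equiv.Perm X, IsAsymorphism 𝓔 h)
    (g : Equiv.Perm X) (hg : Compatible 𝓔 g) :
    Crowded 𝓔 (psupp g) := by
  obtain ⟨s, hs, hsg⟩ := hg
  refine ⟨s, hs, fun y hy => ?_⟩
  have hyb : y ∈ ball s y := h.refl s hs y
  have hgb : g y ∈ ball s y := hsg y
  have hfinb : (ball s y).Finite := (hfin s hs).choose_spec y |>.1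
  exact (Set.one_lt_ncard_iff hfinb).mpr ⟨g y, y, hgb, hyb, hy⟩
end

section
/- Let (X, 𝓔) be an infinite coarse space in which every permutation of X is macro-uniform, let Y ⊆ X with |Y| = |X|, and let λ be a cardinal such that X has two disjoint injective λ-sequences (a_α), (b_α) with (a_α, b_α) ∈ E for some fixed E ∈ 𝓔. Then there exist two injective λ-sequences (x_α), (y_α) in Y with {x_α} ∩ {y_α} = ∅ and an entourage H ∈ 𝓔 such that (x_α, y_α) ∈ H for all α < λ. -/
open Set

/-- Auxiliary: a bijection between two injective functions' ranges, together with a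
bijection between the complements of the ranges, extends to a permutation. -/
lemma aux_exists_perm_extend {X : Type*} {I : Sort*} {c d : I → X}
    (hc : Function.Injective c) (hd : Function.Injective d)
    (e : ↥(Set.range c)ᶜ ≃ ↥(Set.range d)ᶜ) :
    ∃ h : Equiv.Perm X, ∀ z, h (c z) = d z := by
  classical
  refine ⟨(Equiv.Set.sumCompl (Set.range c)).symm.trans
    ((Equiv.sumCongr ((Equiv.ofInjective c hc).symm.trans (Equiv.ofInjective d hd)) e).trans
      (Equiv.Set.sumCompl (Set.range d))), ?_⟩
  intro z
  have h1 : (Equiv.Set.sumCompl (Set.range c)).symm (c z)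
      = Sum.inl ⟨c z, Set.mem_range_self z⟩ := by
    exact Equiv.Set.sumCompl_symm_apply (x := ⟨c z, Set.mem_range_self z⟩)
  simp only [Equiv.trans_apply, h1, Equiv.sumCongr_apply, Sum.map_inl,
    Equiv.ofInjective_symm_apply, Equiv.Set.sumCompl_apply_inl, Equiv.ofInjective_apply]

/-- Auxiliary: if the cardinality of a set is at most that of its complement,
and the ambient type is infinite, the complement has full cardinality. -/
lemma aux_mk_compl_eq {X : Type*} [Infinite X] {s : Set X}
    (h1 : Cardinal.mk ↥s ≤ Cardinal.mk ↥(sᶜ : Set X)) :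
    Cardinal.mk ↥(sᶜ : Set X) = Cardinal.mk X := by
  have key : Cardinal.mk X ≤ Cardinal.mk ↥(sᶜ : Set X) + Cardinal.mk ↥(sᶜ : Set X) := by
    rw [← Cardinal.mk_sum_compl s]
    exact add_le_add h1 le_rfl
  have hinf : Cardinal.aleph0 ≤ Cardinal.mk ↥(sᶜ : Set X) := by
    by_contra hlt
    push_neg at hlt
    exact absurd (key.trans_lt (Cardinal.add_lt_aleph0 hlt hlt))
      (not_lt.mpr (Cardinal.infinite_iff.mp inferInstance))
  refine le_antisymm (Cardinal.mk_set_le _) ?_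
  calc Cardinal.mk X ≤ _ := key
    _ = _ := Cardinal.add_eq_self hinf


/-- Claim A: from two disjoint injective `E`-related sequences, produce an injective
pairing whose range has a full-cardinality complement. -/
lemma aux_claimA {X : Type*} [Infinite X] {I : Type*} {E : Set (X × X)}
    {a b : I → X} (ha : Function.Injective a) (hb : Function.Injective b)
    (hab : Disjoint (Set.range a) (Set.range b)) (hE' : ∀ α, (a α, b α) ∈ E) :
    ∃ c : I ⊕ I → X, Function.Injective c ∧
      (∀ α : I, (c (Sum.inl α), c (Sum.inr α)) ∈ E) ∧
      Cardinal.mk ↥(Set.range c)ᶜ = Cardinal.mk X := by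
  rcases finite_or_infinite I with hfin | hinf
  · refine ⟨Sum.elim a b, ?_, fun α => hE' α, ?_⟩
    · intro z w hzw
      rcases z with z | z <;> rcases w with w | w <;>
        simp only [Sum.elim_inl, Sum.elim_inr] at hzw
      · exact congrArg Sum.inl (ha hzw)
      · exact (Set.disjoint_left.mp hab ⟨z, rfl⟩ ⟨w, hzw.symm⟩).elim
      · exact (Set.disjoint_left.mp hab ⟨w, rfl⟩ ⟨z, hzw⟩).elim
      · exact congrArg Sum.inr (hb hzw)
    · apply aux_mk_compl_eq
      have hfR : (Set.range (Sum.elim a b)).Finite := Set.finite_range _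
      have h1 : Cardinal.mk ↥(Set.range (Sum.elim a b)) < Cardinal.aleph0 := by
        have : Finite ↥(Set.range (Sum.elim a b)) := hfR
        exact Cardinal.lt_aleph0_of_finite _
      have h2 : Cardinal.aleph0 ≤ Cardinal.mk ↥(Set.range (Sum.elim a b))ᶜ := by
        have : Infinite ↥(Set.range (Sum.elim a b))ᶜ := (hfR.infinite_compl).to_subtype
        exact Cardinal.infinite_iff.mp this
      exact le_of_lt (h1.trans_le h2)
  · -- infinite case: reindex via `j : I ⊕ I ≃ I`.
    have hIinf : Cardinal.aleph0 ≤ Cardinal.mk I := Cardinal.infinite_iff.mp hinf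
    have hmkj : Cardinal.mk (I ⊕ I) = Cardinal.mk I := by
      simp [Cardinal.mk_sum, Cardinal.add_eq_self hIinf]
    obtain ⟨j⟩ := Cardinal.eq.mp hmkj
    set c : I ⊕ I → X :=
      Sum.elim (fun α => a (j (Sum.inl α))) (fun α => b (j (Sum.inl α))) with hcdef
    have hcinj : Function.Injective c := by
      intro z w hzw
      rcases z with z | z <;> rcases w with w | w <;>
        simp only [hcdef, Sum.elim_inl, Sum.elim_inr] at hzw
      · have := j.injective (ha hzw)
        simpa using this
      · exact (Set.disjoint_left.mp hab ⟨_, rfl⟩ ⟨_, hzw.symm⟩).elim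
      · exact (Set.disjoint_left.mp hab ⟨_, rfl⟩ ⟨_, hzw⟩).elim
      · have := j.injective (hb hzw)
        simpa using this
    have hmem : ∀ α : I, a (j (Sum.inr α)) ∈ (Set.range c)ᶜ := by
      intro α
      rintro ⟨z | z, hz⟩ <;> simp only [hcdef, Sum.elim_inl, Sum.elim_inr] at hz
      · have := j.injective (ha hz.symm)
        simp at this
      · exact Set.disjoint_left.mp hab ⟨_, rfl⟩ ⟨_, hz⟩
    set g₁ : I → ↥(Set.range c)ᶜ := fun α => ⟨a (j (Sum.inr α)), hmem α⟩ with hg₁def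
    have hg₁ : Function.Injective g₁ := by
      intro α β hαβ
      have : a (j (Sum.inr α)) = a (j (Sum.inr β)) := congrArg Subtype.val hαβ
      simpa using j.injective (ha this)
    refine ⟨c, hcinj, fun α => hE' (j (Sum.inl α)), ?_⟩
    apply aux_mk_compl_eq
    have ψinj : Function.Injective (g₁ ∘ ⇑j ∘ ⇑(Equiv.ofInjective c hcinj).symm) :=
      hg₁.comp (j.injective.comp (Equiv.ofInjective c hcinj).symm.injective)
    exact Cardinal.mk_le_of_injective ψinj

/-- Claim B: an injective pairing into `Y` whose range has a full-cardinality
complement. -/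
lemma aux_claimB {X : Type*} [Infinite X] {I : Type*} {Y : Set X}
    (hY : Cardinal.mk Y = Cardinal.mk X) {a : I → X} (ha : Function.Injective a) :
    ∃ d : I ⊕ I → X, Function.Injective d ∧ Set.range d ⊆ Y ∧
      Cardinal.mk ↥(Set.range d)ᶜ = Cardinal.mk X := by
  have hXinf : Cardinal.aleph0 ≤ Cardinal.mk X := Cardinal.infinite_iff.mp inferInstance
  set K := ↥(Set.range a) with hK
  have hKle : Cardinal.mk K ≤ Cardinal.mk X := Cardinal.mk_set_le _
  have hmkr : Cardinal.mk ((K ⊕ K) ⊕ X) = Cardinal.mk ↥Y := by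
    have h1 : Cardinal.mk (K ⊕ K) = Cardinal.mk K + Cardinal.mk K := by
      simp [Cardinal.mk_sum]
    have h2 : Cardinal.mk K + Cardinal.mk K ≤ Cardinal.mk X :=
      (add_le_add hKle hKle).trans (le_of_eq (Cardinal.add_eq_self hXinf))
    calc Cardinal.mk ((K ⊕ K) ⊕ X)
        = Cardinal.mk (K ⊕ K) + Cardinal.mk X := by simp [Cardinal.mk_sum]
      _ = Cardinal.mk X := Cardinal.add_eq_right hXinf (h1 ▸ h2)
      _ = Cardinal.mk ↥Y := hY.symm
  obtain ⟨r⟩ := Cardinal.eq.mp hmkr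
  set d : I ⊕ I → X :=
    Sum.elim (fun α => ↑(r (Sum.inl (Sum.inl ⟨a α, Set.mem_range_self α⟩))))
      (fun α => ↑(r (Sum.inl (Sum.inr ⟨a α, Set.mem_range_self α⟩)))) with hddef
  have hdinj : Function.Injective d := by
    intro z w hzw
    rcases z with z | z <;> rcases w with w | w <;>
        simp only [hddef, Sum.elim_inl, Sum.elim_inr] at hzw <;>
        have h3 := r.injective (Subtype.coe_injective hzw) <;>
        simp only [Sum.inl.injEq, Sum.inr.injEq, reduceCtorEq] at h3
    · exact congrArg Sum.inl (ha (congrArg Subtype.val h3))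
    · exact congrArg Sum.inr (ha (congrArg Subtype.val h3))
  have hmemd : ∀ w : X, ↑(r (Sum.inr w)) ∈ (Set.range d)ᶜ := by
    intro w
    rintro ⟨z | z, hz⟩ <;>
    · simp only [hddef, Sum.elim_inl, Sum.elim_inr] at hz
      have := r.injective (Subtype.coe_injective hz.symm)
      simp at this
  have hginj : Function.Injective (fun w : X => (⟨↑(r (Sum.inr w)), hmemd w⟩ :
      ↥(Set.range d)ᶜ)) := by
    intro w w' hww'
    simp only [Subtype.mk.injEq] at hww'
    simpa using r.injective (Subtype.coe_injective hww')
  refine ⟨d, hdinj, ?_, ?_⟩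
  · rintro v ⟨z, rfl⟩
    rcases z with z | z
    · exact (r (Sum.inl (Sum.inl ⟨a z, Set.mem_range_self z⟩))).property
    · exact (r (Sum.inl (Sum.inr ⟨a z, Set.mem_range_self z⟩))).property
  · exact le_antisymm (Cardinal.mk_set_le _) (Cardinal.mk_le_of_injective hginj)

theorem exists_sequences_in_Y {X : Type*} [Infinite X]
    (𝓔 : Set (Set (X × X))) (h : IsCoarse 𝓔)
    (hmu : ∀ f : Equiv.Perm X, MacroUniform 𝓔 (⇑f))
    (Y : Set X) (hY : Cardinal.mk Y = Cardinal.mk X)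
    (lam : Cardinal) (E : Set (X × X)) (hE : E ∈ 𝓔)
    (a b : Quotient.out lam → X)
    (ha : Function.Injective a) (hb : Function.Injective b)
    (hab : Disjoint (Set.range a) (Set.range b))
    (hE' : ∀ α, (a α, b α) ∈ E) :
    ∃ x y : Quotient.out lam → X,
      Function.Injective x ∧ Function.Injective y ∧
      Set.range x ⊆ Y ∧ Set.range y ⊆ Y ∧
      Disjoint (Set.range x) (Set.range y) ∧
      ∃ H ∈ 𝓔, ∀ α, (x α, y α) ∈ H := by
  classical
  obtain ⟨c, hcinj, hcE, hccompl⟩ := aux_claimA ha hb hab hE'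
  obtain ⟨d, hdinj, hdY, hdcompl⟩ := aux_claimB hY ha
  obtain ⟨e⟩ := Cardinal.eq.mp (hccompl.trans hdcompl.symm)
  obtain ⟨g, hg⟩ := aux_exists_perm_extend hcinj hdinj e
  obtain ⟨H, hH, hHmu⟩ := hmu g E hE
  refine ⟨fun α => d (Sum.inl α), fun α => d (Sum.inr α),
    hdinj.comp Sum.inl_injective, hdinj.comp Sum.inr_injective,
    ?_, ?_, ?_, H, hH, ?_⟩
  · exact (Set.range_comp_subset_range Sum.inl d).trans hdY
  · exact (Set.range_comp_subset_range Sum.inr d).trans hdY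
  · rw [Set.disjoint_left]
    rintro v ⟨α, rfl⟩ ⟨β, hβ⟩
    cases hdinj hβ
  · intro α
    show (d (Sum.inl α), d (Sum.inr α)) ∈ H
    rw [← hg (Sum.inl α), ← hg (Sum.inr α)]
    exact hHmu _ _ (hcE α)
end

section
/- Let (X, 𝓔) be an infinite finitary coarse space in which every permutation of X is an asymorphism. Then there exists an infinite cardinal κ ≤ |X|⁺ such that the group of permutations compatible with 𝓔 equals S_X^{<κ}. -/
open Set

section AuxProof

open Cardinal

variable {X : Type*} {𝓔 : Set (Set (X × X))}

/-- Workhorse: if some permutation `f` maps the graph of `g` into an entourage,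
then `g` is compatible. -/
lemma compat_of_rel (hasym : ∀ h : Equiv.Perm X, IsAsymorphism 𝓔 h)
    (f g : Equiv.Perm X) {s : Set (X × X)} (hs : s ∈ 𝓔)
    (h : ∀ x, (f x, f (g x)) ∈ s) : Compatible 𝓔 g := by
  obtain ⟨-, mu2⟩ := hasym f
  obtain ⟨t, ht, hmap⟩ := mu2 s hs
  exact ⟨t, ht, fun x => by simpa using hmap (f x) (f (g x)) (h x)⟩

lemma compat_mul (hc : IsCoarse 𝓔) {g g' : Equiv.Perm X}
    (hg : Compatible 𝓔 g) (hg' : Compatible 𝓔 g') :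
    Compatible 𝓔 (g * g') := by
  obtain ⟨s, hs, hgs⟩ := hg
  obtain ⟨s', hs', hgs'⟩ := hg'
  exact ⟨relComp s' s, hc.comp s' hs' s hs, fun x => ⟨g' x, hgs' x, hgs (g' x)⟩⟩

/-- Any entourage containing all pairs of a finite set. -/
lemma exists_entourage_finset (hc : IsCoarse 𝓔) [Nonempty X] (P : Finset (X × X)) :
    ∃ s ∈ 𝓔, ∀ p ∈ P, p ∈ s := by
  classical
  induction P using Finset.induction with
  | empty =>
      obtain ⟨x⟩ := ‹Nonempty X›
      obtain ⟨s, hs, -⟩ := hc.cover (x, x)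
      exact ⟨s, hs, by simp⟩
  | @insert p P hp ih =>
      obtain ⟨s, hs, hPs⟩ := ih
      obtain ⟨s', hs', hps'⟩ := hc.cover p
      refine ⟨relComp s' s, hc.comp s' hs' s hs, ?_⟩
      intro q hq
      rcases Finset.mem_insert.mp hq with rfl | hq
      · exact ⟨q.2, by simpa using hps', hc.refl s hs q.2⟩
      · exact ⟨q.1, hc.refl s' hs' q.1, by simpa using hPs q hq⟩

/-- Permutations with finite support are compatible. -/
lemma compat_of_finite_supp (hc : IsCoarse 𝓔) [Nonempty X] (g : Equiv.Perm X)
    (hfin : (psupp g).Finite) : Compatible 𝓔 g := by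
  classical
  obtain ⟨s, hs, hPs⟩ := exists_entourage_finset hc (hfin.toFinset.image fun x => (x, g x))
  refine ⟨s, hs, fun x => ?_⟩
  by_cases hx : g x = x
  · rw [hx]; exact hc.refl s hs x
  · exact hPs _ (Finset.mem_image.mpr ⟨x, hfin.mem_toFinset.mpr hx, rfl⟩)

/-- A maximal independent set for a permutation. -/
lemma exists_matching (g : Equiv.Perm X) :
    ∃ Z : Set X, Z ⊆ psupp g ∧ (∀ z ∈ Z, g z ∉ Z) ∧
      ∀ x ∈ psupp g, x ∈ Z ∨ g x ∈ Z ∨ g.symm x ∈ Z := by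
  classical
  set S : Set (Set X) := {Z | Z ⊆ psupp g ∧ ∀ z ∈ Z, g z ∉ Z} with hS
  have hch : ∀ c ⊆ S, IsChain (· ⊆ ·) c → ∃ ub ∈ S, ∀ s ∈ c, s ⊆ ub := by
    intro c hcS hchain
    refine ⟨⋃₀ c, ⟨?_, ?_⟩, fun s hs => subset_sUnion_of_mem hs⟩
    · exact sUnion_subset fun t ht => (hcS ht).1
    · rintro z ⟨A, hA, hzA⟩ ⟨B, hB, hgzB⟩
      rcases hchain.total hA hB with hAB | hBA
      · exact (hcS hB).2 z (hAB hzA) hgzB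
      · exact (hcS hA).2 z hzA (hBA hgzB)
  obtain ⟨m, hm⟩ := zorn_subset S hch
  refine ⟨m, hm.prop.1, hm.prop.2, ?_⟩
  intro x hx
  by_contra hcon
  push_neg at hcon
  obtain ⟨h1, h2, h3⟩ := hcon
  have hmem : insert x m ∈ S := by
    constructor
    · exact insert_subset hx hm.prop.1
    · intro z hz
      rcases mem_insert_iff.mp hz with rfl | hzm
      · intro hgz
        rcases mem_insert_iff.mp hgz with he | hgzm
        · exact hx he
        · exact h2 hgzm
      · intro hgz
        rcases mem_insert_iff.mp hgz with he | hgzm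
        · exact h3 (by rw [← he]; simpa using hzm)
        · exact hm.prop.2 z hzm hgzm
  have := hm.eq_of_subset hmem (subset_insert x m)
  exact h1 (this ▸ mem_insert x m)

/-- Cardinality of a maximal matching. -/
lemma mk_matching (g : Equiv.Perm X) (hinf : ℵ₀ ≤ #(psupp g))
    {Z : Set X} (hZs : Z ⊆ psupp g)
    (hcov : ∀ x ∈ psupp g, x ∈ Z ∨ g x ∈ Z ∨ g.symm x ∈ Z) :
    #Z = #(psupp g) := by
  have hsub : psupp g ⊆ Z ∪ g.symm '' Z ∪ g '' Z := by
    intro x hx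
    rcases hcov x hx with h | h | h
    · exact Or.inl (Or.inl h)
    · exact Or.inl (Or.inr ⟨g x, h, by simp⟩)
    · exact Or.inr ⟨g.symm x, h, by simp⟩
  have h1 : #(psupp g) ≤ #Z + #Z + #Z := by
    calc #(psupp g) ≤ #↥(Z ∪ g.symm '' Z ∪ g '' Z) := mk_le_mk_of_subset hsub
    _ ≤ #↥(Z ∪ g.symm '' Z) + #↥(g '' Z) := mk_union_le _ _
    _ ≤ #Z + #↥(g.symm '' Z) + #↥(g '' Z) := by
        exact add_le_add_left (mk_union_le _ _) _
    _ = #Z + #Z + #Z := by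
        rw [mk_image_eq g.symm.injective, mk_image_eq g.injective]
  have hZinf : ℵ₀ ≤ #Z := by
    by_contra hlt
    push_neg at hlt
    have : #Z + #Z + #Z < ℵ₀ := by
      exact Cardinal.add_lt_aleph0 (Cardinal.add_lt_aleph0 hlt hlt) hlt
    exact absurd (h1.trans_lt this) (not_lt.mpr hinf)
  have h3 : #Z + #Z + #Z = #Z := by
    rw [Cardinal.add_eq_self hZinf, Cardinal.add_eq_self hZinf]
  exact le_antisymm (mk_le_mk_of_subset hZs) (h3 ▸ h1)

/-- Splitting an infinite set into two halves of the same cardinality. -/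
lemma exists_half (S : Set X) (hinf : ℵ₀ ≤ #S) :
    ∃ S₁ : Set X, S₁ ⊆ S ∧ #S₁ = #S ∧ #↥(S \ S₁) = #S := by
  have : #(↥S ⊕ ↥S) = #S := by
    rw [Cardinal.mk_sum]; simp [Cardinal.add_eq_self hinf]
  obtain ⟨e⟩ := Cardinal.eq.mp this
  set f₁ : ↥S → X := fun v => (e (Sum.inl v) : X) with hf₁
  set f₂ : ↥S → X := fun v => (e (Sum.inr v) : X) with hf₂
  have hinj1 : Function.Injective f₁ := fun a b hab => by
    have := e.injective (Subtype.ext hab); simpa using this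
  have hinj2 : Function.Injective f₂ := fun a b hab => by
    have := e.injective (Subtype.ext hab); simpa using this
  refine ⟨Set.range f₁, ?_, mk_range_eq f₁ hinj1, ?_⟩
  · rintro x ⟨v, rfl⟩; exact (e (Sum.inl v)).2
  · have : S \ Set.range f₁ = Set.range f₂ := by
      ext x
      constructor
      · rintro ⟨hxS, hx1⟩
        rcases he : e.symm ⟨x, hxS⟩ with v | v
        · exact absurd ⟨v, by simp [hf₁, ← he]⟩ hx1
        · exact ⟨v, by simp [hf₂, ← he]⟩
      · rintro ⟨v, rfl⟩
        refine ⟨(e (Sum.inr v)).2, ?_⟩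
        rintro ⟨w, hw⟩
        have := e.injective (Subtype.ext hw)
        simp at this
    rw [this]
    exact mk_range_eq f₂ hinj2

/-- If the complement of `A` is at most as big as infinite `A`, then `A` has full size. -/
lemma mk_eq_univ_of_compl_le {A : Set X} (h1 : #↥Aᶜ ≤ #A) (h2 : ℵ₀ ≤ #A) :
    #A = #X := by
  refine le_antisymm (mk_set_le A) ?_
  calc #X = #A + #↥Aᶜ := (mk_sum_compl A).symm
  _ ≤ #A + #A := add_le_add_right h1 _
  _ = #A := Cardinal.add_eq_self h2

end AuxProof
section InvolProof

variable {X : Type*}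

/-- Every permutation is the product of two involutions supported inside its support. -/
lemma exists_two_involutions (h : Equiv.Perm X) :
    ∃ a b : Equiv.Perm X, Function.Involutive ⇑a ∧ Function.Involutive ⇑b ∧
      (∀ x, h x = b (a x)) ∧ (∀ x, h x = x → a x = x) ∧ (∀ x, h x = x → b x = x) := by
  classical
  letI s : Setoid X :=
    ⟨fun x y => ∃ k : ℤ, (h ^ k) x = y, by
      constructor
      · exact fun x => ⟨0, by simp⟩
      · rintro x y ⟨k, rfl⟩
        exact ⟨-k, by simp [zpow_neg]⟩
      · rintro x y z ⟨k, rfl⟩ ⟨l, rfl⟩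
        exact ⟨k + l, by rw [add_comm, zpow_add, Equiv.Perm.mul_apply]⟩⟩
  set r : X → X := fun x => (Quotient.mk s x).out with hrdef
  have hr : ∀ x, ∃ k : ℤ, (h ^ k) (r x) = x := fun x => Quotient.mk_out x
  have hrr : ∀ x y, (∃ k : ℤ, (h ^ k) x = y) → r x = r y := fun x y hxy =>
    congrArg Quotient.out (Quotient.sound hxy)
  have cancel : ∀ (y : X) (j k m : ℤ), (h ^ j) y = (h ^ k) y →
      (h ^ (m - j)) y = (h ^ (m - k)) y := by
    intro y j k m hjk
    have e1 : m - j = (m - j - k) + k := by ring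
    have e2 : m - k = (m - j - k) + j := by ring
    rw [e1, e2, zpow_add, zpow_add, Equiv.Perm.mul_apply, Equiv.Perm.mul_apply, hjk]
  set E : X → ℤ := fun x => (hr x).choose with hEdef
  have hE : ∀ x, (h ^ E x) (r x) = x := fun x => (hr x).choose_spec
  set a : X → X := fun x => (h ^ (-E x)) (r x) with hadef
  set b : X → X := fun x => (h ^ (1 - E x)) (r x) with hbdef
  have hrzpow : ∀ x (k : ℤ), r ((h ^ k) x) = r x := fun x k => (hrr _ _ ⟨k, rfl⟩).symm
  have hrr_self : ∀ x, r (r x) = r x := fun x => hrr _ _ ⟨E x, hE x⟩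
  have hra : ∀ x, r (a x) = r x := fun x => by
    rw [hadef]; simp only; rw [hrzpow, hrr_self]
  have hrb : ∀ x, r (b x) = r x := fun x => by
    rw [hbdef]; simp only; rw [hrzpow, hrr_self]
  have hainv : Function.Involutive a := by
    intro x
    have h1 : (h ^ E (a x)) (r x) = (h ^ (-E x)) (r x) := by
      conv_lhs => rw [← hra x]
      rw [hE (a x)]
    have h2 := cancel (r x) (E (a x)) (-E x) 0 h1
    simp only [zero_sub, neg_neg] at h2
    show (h ^ (-E (a x))) (r (a x)) = x
    rw [hra x, h2, hE]
  have hbinv : Function.Involutive b := by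
    intro x
    have h1 : (h ^ E (b x)) (r x) = (h ^ (1 - E x)) (r x) := by
      conv_lhs => rw [← hrb x]
      rw [hE (b x)]
    have h2 := cancel (r x) (E (b x)) (1 - E x) 1 h1
    have e3 : (1 : ℤ) - (1 - E x) = E x := by ring
    rw [e3] at h2
    show (h ^ (1 - E (b x))) (r (b x)) = x
    rw [hrb x, h2, hE]
  have hba : ∀ x, h x = b (a x) := by
    intro x
    have h1 : (h ^ E (a x)) (r x) = (h ^ (-E x)) (r x) := by
      conv_lhs => rw [← hra x]
      rw [hE (a x)]
    have h2 := cancel (r x) (E (a x)) (-E x) 1 h1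
    have e3 : (1 : ℤ) - -E x = 1 + E x := by ring
    rw [e3] at h2
    show h x = (h ^ (1 - E (a x))) (r (a x))
    rw [hra x, h2, zpow_add, Equiv.Perm.mul_apply, zpow_one, hE]
  have hfixa : ∀ x, h x = x → a x = x := by
    intro x hx
    have hfix := Equiv.Perm.zpow_apply_eq_self_of_apply_eq_self hx
    have hrx : r x = x := by
      have := hE x
      have h2 : (h ^ (-E x)) ((h ^ E x) (r x)) = (h ^ (-E x)) x := by rw [this]
      rw [← Equiv.Perm.mul_apply, ← zpow_add, neg_add_cancel, zpow_zero,
        Equiv.Perm.one_apply, hfix] at h2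
      exact h2
    show (h ^ (-E x)) (r x) = x
    rw [hrx, hfix]
  have hfixb : ∀ x, h x = x → b x = x := by
    intro x hx
    have hfix := Equiv.Perm.zpow_apply_eq_self_of_apply_eq_self hx
    have hrx : r x = x := by
      have := hE x
      have h2 : (h ^ (-E x)) ((h ^ E x) (r x)) = (h ^ (-E x)) x := by rw [this]
      rw [← Equiv.Perm.mul_apply, ← zpow_add, neg_add_cancel, zpow_zero,
        Equiv.Perm.one_apply, hfix] at h2
      exact h2
    show (h ^ (1 - E x)) (r x) = x
    rw [hrx, hfix]
  exact ⟨hainv.toPerm, hbinv.toPerm, hainv, hbinv, hba, hfixa, hfixb⟩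

end InvolProof
section RestrictProof

open Cardinal

variable {X : Type*}

open Classical in
/-- The involution acting like `c` on `U ∪ c '' U` and identically elsewhere. -/
noncomputable def restrictInvol (c : Equiv.Perm X) (hc : Function.Involutive ⇑c)
    (U : Set X) : Equiv.Perm X :=
  Function.Involutive.toPerm (fun x => if x ∈ U ∨ c x ∈ U then c x else x) (by
    intro x
    by_cases hx : x ∈ U ∨ c x ∈ U
    · have hcx : c x ∈ U ∨ c (c x) ∈ U := by
        rcases hx with hx | hx
        · right; rw [hc x]; exact hx
        · left; exact hx
      simp only [if_pos hx, if_pos hcx]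
      exact hc x
    · simp only [if_neg hx, if_neg hx])

lemma restrictInvol_apply_of_mem (c : Equiv.Perm X) (hc : Function.Involutive ⇑c)
    (U : Set X) {x : X} (hx : x ∈ U ∨ c x ∈ U) : restrictInvol c hc U x = c x := by
  simp only [restrictInvol, Function.Involutive.coe_toPerm, if_pos hx]
  exact if_pos hx

lemma restrictInvol_apply_of_not_mem (c : Equiv.Perm X) (hc : Function.Involutive ⇑c)
    (U : Set X) {x : X} (hx : ¬(x ∈ U ∨ c x ∈ U)) : restrictInvol c hc U x = x := by
  simp only [restrictInvol, Function.Involutive.coe_toPerm, if_neg hx]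
  exact if_neg hx

lemma restrictInvol_involutive (c : Equiv.Perm X) (hc : Function.Involutive ⇑c)
    (U : Set X) : Function.Involutive ⇑(restrictInvol c hc U) := by
  intro x
  by_cases hx : x ∈ U ∨ c x ∈ U
  · rw [restrictInvol_apply_of_mem c hc U hx]
    have hcx : c x ∈ U ∨ c (c x) ∈ U := by
      rcases hx with hx | hx
      · right; rw [hc x]; exact hx
      · left; exact hx
    rw [restrictInvol_apply_of_mem c hc U hcx, hc x]
  · rw [restrictInvol_apply_of_not_mem c hc U hx, restrictInvol_apply_of_not_mem c hc U hx]

/-- Splitting an involution along a partition of a transversal of its support. -/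
lemma invol_eq_mul (c : Equiv.Perm X) (hc : Function.Involutive ⇑c) (T₁ T₂ : Set X)
    (h21 : ∀ x ∈ T₂, x ∉ T₁) (hd21 : ∀ x ∈ T₂, c x ∉ T₁)
    (hcover : ∀ x, c x ≠ x → (x ∈ T₁ ∨ c x ∈ T₁) ∨ (x ∈ T₂ ∨ c x ∈ T₂)) :
    ∀ x, c x = (restrictInvol c hc T₁) ((restrictInvol c hc T₂) x) := by
  intro x
  by_cases h2 : x ∈ T₂ ∨ c x ∈ T₂
  · rw [restrictInvol_apply_of_mem c hc T₂ h2]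
    have : ¬(c x ∈ T₁ ∨ c (c x) ∈ T₁) := by
      rw [hc x]
      rcases h2 with h2 | h2
      · exact fun h => h.elim (hd21 x h2) (h21 x h2)
      · exact fun h => h.elim (h21 (c x) h2)
          (fun hx => hd21 (c x) h2 (by rw [hc x]; exact hx))
    rw [restrictInvol_apply_of_not_mem c hc T₁ this]
  · rw [restrictInvol_apply_of_not_mem c hc T₂ h2]
    by_cases h1 : x ∈ T₁ ∨ c x ∈ T₁
    · rw [restrictInvol_apply_of_mem c hc T₁ h1]
    · rw [restrictInvol_apply_of_not_mem c hc T₁ h1]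
      by_contra hne
      rcases hcover x hne with h | h
      · exact h1 h
      · exact h2 h

end RestrictProof
section CoreProof

open Cardinal

variable {X : Type*} {𝓔 : Set (Set (X × X))}

/-- Core lemma: an involution whose transversal embeds into a matching of a
compatible permutation is itself compatible. -/
lemma core_embed (hc : IsCoarse 𝓔) (hasym : ∀ h : Equiv.Perm X, IsAsymorphism 𝓔 h)
    {s : Set (X × X)} (hs : s ∈ 𝓔) (g : Equiv.Perm X) (hg : ∀ x, (x, g x) ∈ s)
    (a : Equiv.Perm X) (T : Set X)
    (hinv : Function.Involutive ⇑a)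
    (hdT : ∀ x ∈ T, a x ∉ T)
    (hfix : ∀ x, x ∉ T → a x ∉ T → a x = x)
    (ι : ↥T → X) (hι : Function.Injective ι)
    (hgne : ∀ t t' : ↥T, ι t ≠ g (ι t'))
    (e : ↥{x : X | x ∉ T ∧ a x ∉ T} ≃ ↥((Set.range ι ∪ g '' Set.range ι)ᶜ)) :
    Compatible 𝓔 a := by
  classical
  set W : Set X := Set.range ι ∪ g '' Set.range ι with hWdef
  set f : X → X := fun x =>
    if h1 : x ∈ T then ι ⟨x, h1⟩
    else if h2 : a x ∈ T then g (ι ⟨a x, h2⟩)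
    else ↑(e ⟨x, ⟨h1, h2⟩⟩) with hfdef
  have hfT : ∀ (x : X) (h1 : x ∈ T), f x = ι ⟨x, h1⟩ := by
    intro x h1; simp only [hfdef, dif_pos h1]
  have hfA : ∀ (x : X) (h1 : x ∉ T) (h2 : a x ∈ T), f x = g (ι ⟨a x, h2⟩) := by
    intro x h1 h2; simp only [hfdef, dif_neg h1, dif_pos h2]
  have hfE : ∀ (x : X) (h1 : x ∉ T) (h2 : a x ∉ T), f x = ↑(e ⟨x, ⟨h1, h2⟩⟩) := by
    intro x h1 h2; simp only [hfdef, dif_neg h1, dif_neg h2]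
  have hWmem1 : ∀ t : ↥T, ι t ∈ W := fun t => Or.inl ⟨t, rfl⟩
  have hWmem2 : ∀ t : ↥T, g (ι t) ∈ W := fun t => Or.inr ⟨ι t, ⟨t, rfl⟩, rfl⟩
  have hWnot : ∀ u : ↥{x : X | x ∉ T ∧ a x ∉ T}, (↑(e u) : X) ∉ W := fun u => (e u).2
  have hainj : Function.Injective ⇑a := a.injective
  have hinj : Function.Injective f := by
    intro x y hxy
    by_cases hx1 : x ∈ T
    · rw [hfT x hx1] at hxy
      by_cases hy1 : y ∈ T
      · rw [hfT y hy1] at hxy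
        exact congrArg Subtype.val (hι hxy)
      · by_cases hy2 : a y ∈ T
        · rw [hfA y hy1 hy2] at hxy
          exact absurd hxy (hgne _ _)
        · rw [hfE y hy1 hy2] at hxy
          exact absurd (hxy ▸ hWmem1 ⟨x, hx1⟩) (hWnot _)
    · by_cases hx2 : a x ∈ T
      · rw [hfA x hx1 hx2] at hxy
        by_cases hy1 : y ∈ T
        · rw [hfT y hy1] at hxy
          exact absurd hxy.symm (hgne _ _)
        · by_cases hy2 : a y ∈ T
          · rw [hfA y hy1 hy2] at hxy
            have h3 := hι (g.injective hxy)
            exact hainj (congrArg Subtype.val h3)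
          · rw [hfE y hy1 hy2] at hxy
            exact absurd (hxy ▸ hWmem2 ⟨a x, hx2⟩) (hWnot _)
      · rw [hfE x hx1 hx2] at hxy
        by_cases hy1 : y ∈ T
        · rw [hfT y hy1] at hxy
          exact absurd (hxy ▸ hWmem1 ⟨y, hy1⟩) (hWnot _)
        · by_cases hy2 : a y ∈ T
          · rw [hfA y hy1 hy2] at hxy
            exact absurd (hxy ▸ hWmem2 ⟨a y, hy2⟩) (hWnot _)
          · rw [hfE y hy1 hy2] at hxy
            have := e.injective (Subtype.ext hxy)
            exact congrArg Subtype.val this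
  have hsurj : Function.Surjective f := by
    intro y
    by_cases hy1 : y ∈ Set.range ι
    · obtain ⟨t, rfl⟩ := hy1
      exact ⟨↑t, by rw [hfT ↑t t.2, Subtype.coe_eta]⟩
    · by_cases hy2 : y ∈ g '' Set.range ι
      · obtain ⟨-, ⟨t, rfl⟩, rfl⟩ := hy2
        refine ⟨a ↑t, ?_⟩
        have h1 : a ↑t ∉ T := hdT ↑t t.2
        have h2 : a (a ↑t) ∈ T := by rw [hinv ↑t]; exact t.2
        rw [hfA (a ↑t) h1 h2]
        congr 1
        exact congrArg ι (Subtype.ext (hinv ↑t))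
      · have hyW : y ∈ Wᶜ := fun h => h.elim hy1 hy2
        set u := e.symm ⟨y, hyW⟩ with hu
        refine ⟨↑u, ?_⟩
        rw [hfE ↑u u.2.1 u.2.2]
        have : (⟨↑u, ⟨u.2.1, u.2.2⟩⟩ : ↥{x : X | x ∉ T ∧ a x ∉ T}) = u := Subtype.coe_eta u _
        rw [this, hu, Equiv.apply_symm_apply]
  set F : Equiv.Perm X := Equiv.ofBijective f ⟨hinj, hsurj⟩ with hFdef
  have hFapp : ∀ x, F x = f x := fun x => rfl
  refine compat_of_rel hasym F a (s := relComp s (relInv s))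
    (hc.comp s hs (relInv s) (hc.inv s hs)) ?_
  intro x
  rw [hFapp, hFapp]
  by_cases h1 : x ∈ T
  · have ha1 : a x ∉ T := hdT x h1
    have ha2 : a (a x) ∈ T := by rw [hinv x]; exact h1
    rw [hfT x h1, hfA (a x) ha1 ha2]
    have : (⟨a (a x), ha2⟩ : ↥T) = ⟨x, h1⟩ := Subtype.ext (hinv x)
    rw [this]
    exact ⟨g (ι ⟨x, h1⟩), hg _, hc.refl s hs _⟩
  · by_cases h2 : a x ∈ T
    · rw [hfA x h1 h2, hfT (a x) h2]
      exact ⟨g (ι ⟨a x, h2⟩), hc.refl s hs _, hg _⟩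
    · have hax : a x = x := hfix x h1 h2
      rw [hax]
      exact ⟨f x, hc.refl s hs _, hc.refl s hs _⟩

end CoreProof
section KeyProof

open Cardinal

variable {X : Type*} {𝓔 : Set (Set (X × X))}

lemma key_lemma (hc : IsCoarse 𝓔) (hasym : ∀ f : Equiv.Perm X, IsAsymorphism 𝓔 f)
    {g p : Equiv.Perm X} (hg : Compatible 𝓔 g)
    (hinf : ℵ₀ ≤ #(psupp p)) (hle : #(psupp p) ≤ #(psupp g)) :
    Compatible 𝓔 p := by
  classical
  have hne0 : #(psupp p) ≠ 0 := fun h0 => by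
    rw [h0] at hinf
    exact Cardinal.aleph0_ne_zero (le_zero_iff.mp hinf)
  haveI hXne : Nonempty X := by
    obtain ⟨x⟩ := Cardinal.mk_ne_zero_iff.mp hne0
    exact ⟨x.1⟩
  obtain ⟨s, hs, hgs⟩ := hg
  have hgs' : ∀ x, (x, g x) ∈ s := hgs
  have hginf : ℵ₀ ≤ #(psupp g) := hinf.trans hle
  obtain ⟨Z, hZs, hZd, hZcov⟩ := exists_matching g
  have hZcard : #Z = #(psupp g) := mk_matching g hginf hZs hZcov
  have hZinf : ℵ₀ ≤ #Z := hZcard ▸ hginf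
  obtain ⟨Z₁, hZ₁s, hZ₁c, hZ₂c⟩ := exists_half Z hZinf
  -- The main claim: any involution supported inside `psupp p` is compatible.
  have main : ∀ c : Equiv.Perm X, Function.Involutive ⇑c →
      (∀ x, p x = x → c x = x) → Compatible 𝓔 c := by
    intro c hcinv hcsupp
    have hsupp_sub : psupp c ⊆ psupp p := by
      intro x hx
      by_contra hx'
      have hpx : p x = x := not_not.mp hx'
      exact hx (hcsupp x hpx)
    by_cases hfin : (psupp c).Finite
    · exact compat_of_finite_supp hc c hfin
    · have hcinf : ℵ₀ ≤ #(psupp c) :=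
        Cardinal.infinite_iff.mp (Set.infinite_coe_iff.mpr hfin)
      have hcle : #(psupp c) ≤ #Z := by
        rw [hZcard]
        exact (mk_le_mk_of_subset hsupp_sub).trans hle
      obtain ⟨T, hTs, hTd, hTcov⟩ := exists_matching c
      have hTcard : #T = #(psupp c) := mk_matching c hcinf hTs hTcov
      have hcsymm : ∀ x, c.symm x = c x := fun x => c.symm_apply_eq.mpr (hcinv x).symm
      have hTcov' : ∀ x, c x ≠ x → x ∈ T ∨ c x ∈ T := by
        intro x hx
        rcases hTcov x hx with h | h | h
        · exact Or.inl h
        · exact Or.inr h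
        · rw [hcsymm x] at h
          exact Or.inr h
      have hTinf : ℵ₀ ≤ #T := hTcard ▸ hcinf
      obtain ⟨T₁, hT₁s, hT₁c, hT₂c⟩ := exists_half T hTinf
      -- compatibility of each half
      have half : ∀ U : Set X, U ⊆ T → #U = #T → #↥(T \ U) = #T →
          Compatible 𝓔 (restrictInvol c hcinv U) := by
        intro U hUs hUc hUc'
        set d := restrictInvol c hcinv U with hd
        have hdinv := restrictInvol_involutive c hcinv U
        have hdU : ∀ x ∈ U, d x = c x := fun x hx =>
          restrictInvol_apply_of_mem c hcinv U (Or.inl hx)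
        have hdT : ∀ x ∈ U, d x ∉ U := by
          intro x hx hdx
          rw [hdU x hx] at hdx
          exact hTd x (hUs hx) (hUs hdx)
        have hdfix : ∀ x, x ∉ U → d x ∉ U → d x = x := by
          intro x hx1 hx2
          by_cases hP : x ∈ U ∨ c x ∈ U
          · rcases hP with hP | hP
            · exact absurd hP hx1
            · rw [restrictInvol_apply_of_mem c hcinv U (Or.inr hP)] at hx2 ⊢
              exact absurd hP hx2
          · exact restrictInvol_apply_of_not_mem c hcinv U hP
        have hUcard : #U = #(psupp c) := hUc.trans hTcard
        have hUZ : #U ≤ #↥Z₁ := by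
          rw [hUcard, hZ₁c]
          exact hcle
        obtain ⟨emb⟩ := Cardinal.le_def _ _ |>.mp hUZ
        set ι : ↥U → X := fun t => ↑(emb t) with hι0
        have hι : Function.Injective ι := fun t t' htt =>
          emb.injective (Subtype.ext htt)
        have hιZ : ∀ t : ↥U, ι t ∈ Z := fun t => hZ₁s (emb t).2
        have hιZ₁ : ∀ t : ↥U, ι t ∈ Z₁ := fun t => (emb t).2
        have hgne : ∀ t t' : ↥U, ι t ≠ g (ι t') := by
          intro t t' heq
          exact hZd (ι t') (hιZ t') (heq ▸ hιZ t)
        set W : Set X := Set.range ι ∪ g '' Set.range ι with hW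
        have hUinf : ℵ₀ ≤ #U := by rw [hUcard]; exact hcinf
        have hWle : #W ≤ #U := by
          calc #W ≤ #↥(Set.range ι) + #↥(g '' Set.range ι) := mk_union_le _ _
          _ = #U + #U := by
              rw [mk_image_eq g.injective, mk_range_eq ι hι]
          _ = #U := Cardinal.add_eq_self hUinf
        -- the fixed part of d has full cardinality
        have hFa : #↥{x : X | x ∉ U ∧ d x ∉ U} = #X := by
          have hsub : T \ U ⊆ {x : X | x ∉ U ∧ d x ∉ U} := by
            intro x hx
            have hx1 : x ∉ U := hx.2
            have hdx : d x = x := by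
              apply restrictInvol_apply_of_not_mem
              rintro (h | h)
              · exact hx1 h
              · exact hTd x hx.1 (hUs h)
            exact ⟨hx1, by rw [hdx]; exact hx1⟩
          have h1 : #(psupp c) ≤ #↥{x : X | x ∉ U ∧ d x ∉ U} := by
            rw [← hTcard, ← hUc']
            exact mk_le_mk_of_subset hsub
          have hcompl : {x : X | x ∉ U ∧ d x ∉ U}ᶜ ⊆ U ∪ d.symm '' U := by
            intro x hx
            simp only [Set.mem_compl_iff, Set.mem_setOf_eq, not_and, not_not] at hx
            by_cases hxU : x ∈ U
            · exact Or.inl hxU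
            · exact Or.inr ⟨d x, hx hxU, by rw [Equiv.symm_apply_apply]⟩
          have h2 : #↥({x : X | x ∉ U ∧ d x ∉ U}ᶜ) ≤ #(psupp c) := by
            calc #↥({x : X | x ∉ U ∧ d x ∉ U}ᶜ) ≤ #↥(U ∪ d.symm '' U) :=
              mk_le_mk_of_subset hcompl
            _ ≤ #U + #↥(d.symm '' U) := mk_union_le _ _
            _ = #U + #U := by rw [mk_image_eq d.symm.injective]
            _ = #U := Cardinal.add_eq_self hUinf
            _ = #(psupp c) := hUcard
          exact mk_eq_univ_of_compl_le (h2.trans h1) (hcinf.trans h1)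
        have hWc : #↥(Wᶜ) = #X := by
          have hsub : Z \ Z₁ ⊆ Wᶜ := by
            rintro z hz (h | h)
            · obtain ⟨t, rfl⟩ := h
              exact hz.2 (hιZ₁ t)
            · obtain ⟨-, ⟨t, rfl⟩, heq⟩ := h
              exact hZd (ι t) (hιZ t) (heq ▸ hz.1)
          have h1 : #(psupp c) ≤ #↥(Wᶜ) := by
            calc #(psupp c) ≤ #Z := hcle
            _ = #↥(Z \ Z₁) := hZ₂c.symm
            _ ≤ #↥(Wᶜ) := mk_le_mk_of_subset hsub
          have h2 : #↥(Wᶜᶜ) ≤ #↥(Wᶜ) := by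
            rw [compl_compl]
            calc #W ≤ #U := hWle
            _ = #(psupp c) := hUcard
            _ ≤ #↥(Wᶜ) := h1
          exact mk_eq_univ_of_compl_le h2 (hcinf.trans h1)
        obtain ⟨e⟩ := Cardinal.eq.mp (hFa.trans hWc.symm)
        exact core_embed hc hasym hs g hgs' d U hdinv hdT hdfix ι hι hgne e
      -- assemble the two halves
      have hprod := invol_eq_mul c hcinv T₁ (T \ T₁)
        (fun x hx => hx.2)
        (fun x hx h1 => hTd x hx.1 (hT₁s h1))
        (by
          intro x hx
          rcases hTcov' x hx with h | h
          · by_cases h1 : x ∈ T₁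
            · exact Or.inl (Or.inl h1)
            · exact Or.inr (Or.inl ⟨h, h1⟩)
          · by_cases h1 : c x ∈ T₁
            · exact Or.inl (Or.inr h1)
            · exact Or.inr (Or.inr ⟨h, h1⟩))
      have hceq : c = (restrictInvol c hcinv T₁) * (restrictInvol c hcinv (T \ T₁)) := by
        ext x
        exact hprod x
      rw [hceq]
      refine compat_mul hc (half T₁ hT₁s hT₁c hT₂c) (half (T \ T₁) Set.diff_subset ?_ ?_)
      · exact hT₂c
      · have h5 : T \ (T \ T₁) = T₁ := by
          rw [Set.diff_diff_right_self]
          exact Set.inter_eq_self_of_subset_right hT₁s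
        rw [h5]
        exact hT₁c
  -- decompose p into two involutions
  obtain ⟨A, B, hAinv, hBinv, hAB, hAfix, hBfix⟩ := exists_two_involutions p
  have hpeq : p = B * A := by
    ext x
    exact hAB x
  rw [hpeq]
  exact compat_mul hc (main B hBinv hBfix) (main A hAinv hAfix)

end KeyProof
theorem compatible_eq_suppLT {X : Type*} [Infinite X]
    (𝓔 : Set (Set (X × X))) (h : IsCoarse 𝓔) (hfin : Finitary 𝓔)
    (hasym : ∀ h : Equiv.Perm X, IsAsymorphism 𝓔 h) :
    ∃ κ : Cardinal, Cardinal.aleph0 ≤ κ ∧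
      κ ≤ Order.succ (Cardinal.mk X) ∧
      {g : Equiv.Perm X | Compatible 𝓔 g} = SuppLT X κ := by
  classical
  by_cases hK : ∃ g₀ : Equiv.Perm X, ¬Compatible 𝓔 g₀
  · set K : Set Cardinal := {c | ∃ g₀ : Equiv.Perm X, ¬Compatible 𝓔 g₀ ∧ c = Cardinal.mk (psupp g₀)}
      with hKdef
    have hKne : K.Nonempty := ⟨_, hK.choose, hK.choose_spec, rfl⟩
    obtain ⟨g₀, hg₀, hκ⟩ := csInf_mem hKne
    have hκinf : Cardinal.aleph0 ≤ Cardinal.mk (psupp g₀) := by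
      by_contra hlt
      push_neg at hlt
      exact hg₀ (compat_of_finite_supp h g₀ (Cardinal.lt_aleph0_iff_set_finite.mp hlt))
    refine ⟨sInf K, ?_, ?_, ?_⟩
    · rw [hκ]
      exact hκinf
    · rw [hκ]
      exact (Cardinal.mk_set_le _).trans (Order.le_succ _)
    · ext g
      simp only [Set.mem_setOf_eq, SuppLT]
      constructor
      · intro hgc
        by_contra hge
        push_neg at hge
        rw [hκ] at hge
        exact hg₀ (key_lemma h hasym hgc hκinf hge)
      · intro hlt
        by_contra hgc
        have : Cardinal.mk (psupp g) ∈ K := ⟨g, hgc, rfl⟩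
        exact absurd (csInf_le' this) (not_le.mpr hlt)
  · push_neg at hK
    refine ⟨Order.succ (Cardinal.mk X), ?_, le_rfl, ?_⟩
    · exact (Cardinal.aleph0_le_mk X).trans (Order.le_succ _)
    · ext g
      simp only [Set.mem_setOf_eq, SuppLT]
      exact ⟨fun _ => Order.lt_succ_iff.mpr (Cardinal.mk_set_le _), fun _ => hK g⟩
end
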